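/- Let T be a unitary finite rooted edge-weighted tree, let v be a real number in [0,1], and let A be a set of nodes of T such that no leaf of T descends from two distinct members of A and every a in A has a designated child c(a) whose connecting arc from a is labeled v (the same v for all a in A). Let beta be the sum of the path values of all leaves descending from some member of A, and let alpha be the sum of the path values of all leaves descending from some node c(a) with a in A. Then alpha = v * beta; in particular, if beta > 0 then alpha / beta = v. (This is the key computation establishing that causal probabilities entail the corresponding conditional probabilities in the proof of the Coherency Condition theorem.) -/

import Mathlib

/-- A finite rooted edge-weighted tree: a root node together with a finite
list of (weight, subtree) pairs. -/
inductive WTree : Type where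
  | node : List (ℝ × WTree) → WTree

namespace WTree

/-- The subtree of `t` at position `p` (a list of child indices), if it exists. -/
def subtree? : WTree → List ℕ → Option WTree
  | t, [] => some t
  | .node cs, i :: p =>
    match cs[i]? with
    | some wc => subtree? wc.2 p
    | none => none

/-- The path value of the position `p`: the product of the weights of the arcs on
the path from the root to `p` (the path value of the root is `1`). -/
noncomputable def pv : WTree → List ℕ → ℝ
  | _, [] => 1
  | .node cs, i :: p =>
    match cs[i]? with
    | some wc => wc.1 * pv wc.2 p
    | none => 0

/-- `p` is a node of `t`. -/
def IsNode (t : WTree) (p : List ℕ) : Prop := (subtree? t p).isSome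

/-- `p` is a leaf of `t` (a node with no children). -/
def IsLeaf (t : WTree) (p : List ℕ) : Prop := subtree? t p = some (.node [])

/-- `t` is unitary: every arc is labeled with a real number in `[0,1]` and,
for every node with at least one child, the labels of the arcs leaving that
node sum to `1`. -/
def Unitary (t : WTree) : Prop :=
  ∀ p cs, subtree? t p = some (.node cs) →
    (∀ wc ∈ cs, 0 ≤ wc.1 ∧ wc.1 ≤ 1) ∧
    (cs ≠ [] → (cs.map Prod.fst).sum = 1)

end WTree

namespace WTree

/-- The label of the arc leaving node `p` towards its `i`-th child, if it exists. -/
def arcWeight (t : WTree) (p : List ℕ) (i : ℕ) : Option ℝ :=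
  match subtree? t p with
  | some (.node cs) => (cs[i]?).map Prod.fst
  | none => none

end WTree

open WTree

namespace WTree

theorem mem_of_getElem?' {α : Type*} {l : List α} {i : ℕ} {a : α} (h : l[i]? = some a) :
    a ∈ l := by
  obtain ⟨h', rfl⟩ := List.getElem?_eq_some_iff.mp h
  exact List.getElem_mem h'

/-- The positions of the leaves of a tree. -/
def leaves : WTree → List (List ℕ)
  | .node cs =>
    if cs.isEmpty then [[]]
    else (List.range cs.length).flatMap fun i =>
      match h : cs[i]? with
      | some wc => (leaves wc.2).map (i :: ·)
      | none => []
termination_by t => sizeOf t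
decreasing_by
  have h1 := List.sizeOf_lt_of_mem (mem_of_getElem?' h)
  have h2 : sizeOf wc.2 < sizeOf wc := by cases wc; simp
  simp at h1 ⊢
  omega

theorem leaves_node_ne (cs : List (ℝ × WTree)) (hcs : cs ≠ []) :
    leaves (.node cs) = (List.range cs.length).flatMap fun i =>
      match cs[i]? with
      | some wc => (leaves wc.2).map (i :: ·)
      | none => [] := by
  rw [leaves, if_neg (by simpa using hcs)]
  congr 1
  funext i
  cases hg : cs[i]? <;> simp [hg]

/-- Custom induction principle. -/
theorem myInd (P : WTree → Prop)
    (h : ∀ cs : List (ℝ × WTree), (∀ wc ∈ cs, P wc.2) → P (.node cs)) :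
    ∀ t, P t := by
  have key : ∀ n : ℕ, ∀ t : WTree, sizeOf t < n → P t := by
    intro n
    induction n with
    | zero => intro t ht; omega
    | succ n ih =>
      intro t ht
      cases t with
      | node cs =>
        refine h cs fun wc hm => ih wc.2 ?_
        have h1 := List.sizeOf_lt_of_mem hm
        have h2 : sizeOf wc.2 < sizeOf wc := by cases wc; simp
        simp at ht
        omega
  exact fun t => key (sizeOf t + 1) t (by omega)

theorem subtree?_append (p : List ℕ) : ∀ (t : WTree) (q : List ℕ),
    subtree? t (p ++ q) = (subtree? t p).bind (fun s => subtree? s q) := by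
  induction p with
  | nil => intro t q; simp [subtree?]
  | cons i p ih =>
    intro t q
    cases t with
    | node cs =>
      cases h : cs[i]? with
      | some wc => simp [subtree?, h, ih]
      | none => simp [subtree?, h]

theorem pv_append (p : List ℕ) : ∀ (t : WTree) (s : WTree) (q : List ℕ),
    subtree? t p = some s → pv t (p ++ q) = pv t p * pv s q := by
  induction p with
  | nil =>
    intro t s q h
    simp [subtree?] at h
    subst h
    simp [pv]
  | cons i p ih =>
    intro t s q h
    cases t with
    | node cs =>
      cases hg : cs[i]? with
      | some wc =>
        simp [subtree?, hg] at h
        simp [pv, hg, ih wc.2 s q h, mul_assoc]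
      | none => simp [subtree?, hg] at h

theorem unitary_subtree {t s : WTree} {a : List ℕ} (ht : Unitary t)
    (hs : subtree? t a = some s) : Unitary s := by
  intro p cs hp
  refine ht (a ++ p) cs ?_
  rw [subtree?_append, hs]
  exact hp

theorem isLeaf_append {t s : WTree} {a : List ℕ} (hs : subtree? t a = some s) (r : List ℕ) :
    IsLeaf t (a ++ r) ↔ IsLeaf s r := by
  unfold IsLeaf
  rw [subtree?_append, hs]
  rfl

theorem mem_leaves : ∀ (t : WTree) (r : List ℕ), r ∈ leaves t ↔ IsLeaf t r := by
  refine fun t => myInd (fun t => ∀ r, r ∈ leaves t ↔ IsLeaf t r) ?_ t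
  intro cs ih r
  by_cases hcs : cs = []
  · subst hcs
    rw [leaves, if_pos (by simp)]
    simp only [List.mem_singleton]
    constructor
    · rintro rfl; rfl
    · intro h
      cases r with
      | nil => rfl
      | cons i r => simp [IsLeaf, subtree?] at h
  · rw [leaves_node_ne cs hcs]
    simp only [List.mem_flatMap, List.mem_range]
    constructor
    · rintro ⟨i, hi, hr⟩
      cases hg : cs[i]? with
      | some wc =>
        rw [hg] at hr
        simp only [List.mem_map] at hr
        obtain ⟨r', hr', rfl⟩ := hr
        have := (ih wc (mem_of_getElem?' hg) r').mp hr'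
        simpa [IsLeaf, subtree?, hg] using this
      | none =>
        rw [hg] at hr
        simp at hr
    · intro h
      cases r with
      | nil =>
        simp only [IsLeaf, subtree?, Option.some_inj] at h
        exact absurd (by injection h) hcs
      | cons i r' =>
        cases hg : cs[i]? with
        | some wc =>
          have hlt : i < cs.length := by
            by_contra hlt
            rw [List.getElem?_eq_none (by omega)] at hg
            cases hg
          refine ⟨i, hlt, ?_⟩
          rw [hg]
          simp only [List.mem_map]
          refine ⟨r', ?_, rfl⟩
          refine (ih wc (mem_of_getElem?' hg) r').mpr ?_
          simpa [IsLeaf, subtree?, hg] using h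
        | none => simp [IsLeaf, subtree?, hg] at h

theorem nodup_leaves : ∀ t : WTree, (leaves t).Nodup := by
  refine myInd _ ?_
  intro cs ih
  by_cases hcs : cs = []
  · simp [leaves, hcs]
  · rw [leaves_node_ne cs hcs, List.nodup_flatMap]
    constructor
    · intro i _
      cases hg : cs[i]? with
      | some wc =>
        exact (ih wc (mem_of_getElem?' hg)).map
          (fun x y hxy => by injection hxy)
      | none => simp
    · refine (List.pairwise_lt_range).imp ?_
      intro i j hij r hi hj
      simp only [] at hi hj
      cases hgi : cs[i]? with
      | some wci =>
        simp only [hgi, List.mem_map] at hi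
        obtain ⟨r1, _, rfl⟩ := hi
        cases hgj : cs[j]? with
        | some wcj =>
          simp only [hgj, List.mem_map] at hj
          obtain ⟨r2, _, heq⟩ := hj
          injection heq with h1 _
          omega
        | none => simp [hgj] at hj
      | none => simp [hgi] at hi

theorem sum_map_flatMap {α β γ : Type*} [AddCommMonoid γ] (l : List α) (f : α → List β)
    (g : β → γ) :
    (((l.flatMap f)).map g).sum = (l.map (fun x => ((f x).map g).sum)).sum := by
  induction l with
  | nil => simp
  | cons x l ih => simp [ih]

theorem sum_map_range_getElem? (cs : List (ℝ × WTree)) (g : ℝ × WTree → ℝ) :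
    ((List.range cs.length).map (fun i =>
      match cs[i]? with | some wc => g wc | none => 0)).sum = (cs.map g).sum := by
  induction cs with
  | nil => simp
  | cons x cs ih =>
    rw [List.length_cons, List.range_succ_eq_map, List.map_cons, List.map_map]
    simp only [List.getElem?_cons_zero, List.sum_cons, Function.comp]
    rw [List.map_cons, List.sum_cons]
    congr 1

theorem sum_leaves : ∀ t : WTree, Unitary t → ((leaves t).map (pv t)).sum = 1 := by
  refine myInd _ ?_
  intro cs ih ht
  by_cases hcs : cs = []
  · simp [leaves, hcs, pv]
  · rw [leaves_node_ne cs hcs, sum_map_flatMap]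
    have hsum : (cs.map Prod.fst).sum = 1 := (ht [] cs rfl).2 hcs
    have hbranch : ∀ i, (((match cs[i]? with
        | some wc => (leaves wc.2).map (i :: ·)
        | none => [] : List (List ℕ))).map (pv (node cs))).sum =
        ((match cs[i]? with | some wc => wc.1 | none => 0 : ℝ)) := by
      intro i
      cases hg : cs[i]? with
      | some wc =>
        simp only [hg, List.map_map]
        have hmem := mem_of_getElem?' hg
        have hu : Unitary wc.2 := unitary_subtree (a := [i]) ht (by simp [subtree?, hg])
        have : (pv (node cs)) ∘ (i :: ·) = fun r => wc.1 * pv wc.2 r := by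
          funext r
          simp [pv, hg, Function.comp]
        rw [this, List.sum_map_mul_left, ih wc hmem hu, mul_one]
      | none => simp [hg]
    calc ((List.range cs.length).map fun i => (((match cs[i]? with
            | some wc => (leaves wc.2).map (i :: ·)
            | none => [] : List (List ℕ))).map (pv (node cs))).sum).sum
        = ((List.range cs.length).map fun i =>
            ((match cs[i]? with | some wc => wc.1 | none => 0 : ℝ))).sum := by
          congr 1
          exact List.map_congr_left fun i _ => hbranch i
      _ = (cs.map Prod.fst).sum := sum_map_range_getElem? cs Prod.fst
      _ = 1 := hsum

theorem sum_over_leaves_from (t : WTree) (ht : Unitary t) (a : List ℕ) (s : WTree)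
    (hs : subtree? t a = some s) (S : Finset (List ℕ))
    (hS : ∀ p, p ∈ S ↔ IsLeaf t p ∧ a <+: p) :
    ∑ p ∈ S, pv t p = pv t a := by
  classical
  have hnd : ((leaves s).map (a ++ ·)).Nodup :=
    (nodup_leaves s).map fun x y hxy => List.append_cancel_left hxy
  have hSeq : S = ((leaves s).map (a ++ ·)).toFinset := by
    ext p
    rw [hS, List.mem_toFinset, List.mem_map]
    constructor
    · rintro ⟨hleaf, r, rfl⟩
      exact ⟨r, (mem_leaves s r).mpr ((isLeaf_append hs r).mp hleaf), rfl⟩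
    · rintro ⟨r, hr, rfl⟩
      exact ⟨(isLeaf_append hs r).mpr ((mem_leaves s r).mp hr), r, rfl⟩
  rw [hSeq, List.sum_toFinset _ hnd, List.map_map]
  have : (pv t) ∘ (a ++ ·) = fun r => pv t a * pv s r := by
    funext r
    exact pv_append a t s r hs
  rw [this, List.sum_map_mul_left, sum_leaves s (unitary_subtree ht hs), mul_one]

end WTree

/-- Let `t` be a unitary tree, `v ∈ [0,1]`, and `A` a set of nodes of `t` such that no
leaf descends from two distinct members of `A` and every `a ∈ A` has a designated child
`c a` whose connecting arc from `a` is labeled `v`.  Let `beta` (the sum over `L`) be the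
sum of the path values of all leaves descending from some member of `A`, and `alpha`
(the sum over `La`) the sum of the path values of all leaves descending from some `c a`
with `a ∈ A`.  Then `alpha = v * beta`; in particular, if `beta > 0` then
`alpha / beta = v`. -/
theorem unitary_tree_alpha_beta (t : WTree) (ht : Unitary t)
    (v : ℝ) (hv0 : 0 ≤ v) (hv1 : v ≤ 1)
    (A : Finset (List ℕ)) (hA : ∀ a ∈ A, IsNode t a)
    (hdisj : ∀ p, IsLeaf t p → ∀ a ∈ A, ∀ b ∈ A, a <+: p → b <+: p → a = b)
    (c : List ℕ → List ℕ)
    (hc : ∀ a ∈ A, ∃ i : ℕ, c a = a ++ [i] ∧ arcWeight t a i = some v)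
    (L La : Finset (List ℕ))
    (hL : ∀ p, p ∈ L ↔ IsLeaf t p ∧ ∃ a ∈ A, a <+: p)
    (hLa : ∀ p, p ∈ La ↔ IsLeaf t p ∧ ∃ a ∈ A, c a <+: p) :
    (∑ p ∈ La, pv t p) = v * (∑ p ∈ L, pv t p) ∧
    (0 < ∑ p ∈ L, pv t p →
      (∑ p ∈ La, pv t p) / (∑ p ∈ L, pv t p) = v) := by
  classical
  -- structure at each a ∈ A
  have hstruct : ∀ a ∈ A, ∃ (csa : List (ℝ × WTree)) (i : ℕ) (wc : ℝ × WTree),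
      subtree? t a = some (.node csa) ∧ c a = a ++ [i] ∧ csa[i]? = some wc ∧ wc.1 = v := by
    intro a ha
    obtain ⟨i, hca, hw⟩ := hc a ha
    have hn := hA a ha
    rw [IsNode, Option.isSome_iff_exists] at hn
    obtain ⟨sa, hsa⟩ := hn
    cases sa with
    | node csa =>
      simp only [arcWeight, hsa] at hw
      cases hg : csa[i]? with
      | some wc =>
        rw [hg] at hw
        simp only [Option.map_some, Option.some_inj] at hw
        exact ⟨csa, i, wc, hsa, hca, hg, hw⟩
      | none => rw [hg] at hw; simp at hw
  -- a is a prefix of c a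
  have hpre : ∀ a ∈ A, a <+: c a := by
    intro a ha
    obtain ⟨i, hca, _⟩ := hc a ha
    exact ⟨[i], hca.symm⟩
  -- beta
  have hLsplit : (∑ p ∈ L, pv t p) = ∑ a ∈ A, pv t a := by
    have hU : L = A.biUnion (fun a => L.filter (fun p => a <+: p)) := by
      ext p
      simp only [Finset.mem_biUnion, Finset.mem_filter]
      constructor
      · intro hp
        obtain ⟨_, a, ha, hap⟩ := (hL p).mp hp
        exact ⟨a, ha, hp, hap⟩
      · rintro ⟨a, ha, hp, _⟩
        exact hp
    rw [hU, Finset.sum_biUnion]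
    · refine Finset.sum_congr rfl fun a ha => ?_
      obtain ⟨csa, i, wc, hsa, _, _, _⟩ := hstruct a ha
      refine WTree.sum_over_leaves_from t ht a _ hsa _ fun p => ?_
      simp only [Finset.mem_filter, hL p]
      constructor
      · rintro ⟨⟨hleaf, _⟩, hap⟩
        exact ⟨hleaf, hap⟩
      · rintro ⟨hleaf, hap⟩
        exact ⟨⟨hleaf, a, ha, hap⟩, hap⟩
    · intro a ha b hb hab
      simp only [Function.onFun, Finset.disjoint_left, Finset.mem_filter]
      rintro p ⟨hp, hap⟩ ⟨_, hbp⟩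
      exact hab (hdisj p ((hL p).mp hp).1 a ha b hb hap hbp)
  -- alpha
  have hLasplit : (∑ p ∈ La, pv t p) = ∑ a ∈ A, v * pv t a := by
    have hU : La = A.biUnion (fun a => La.filter (fun p => c a <+: p)) := by
      ext p
      simp only [Finset.mem_biUnion, Finset.mem_filter]
      constructor
      · intro hp
        obtain ⟨_, a, ha, hap⟩ := (hLa p).mp hp
        exact ⟨a, ha, hp, hap⟩
      · rintro ⟨a, ha, hp, _⟩
        exact hp
    rw [hU, Finset.sum_biUnion]
    · refine Finset.sum_congr rfl fun a ha => ?_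
      obtain ⟨csa, i, wc, hsa, hca, hg, hwv⟩ := hstruct a ha
      have hsub : subtree? t (c a) = some wc.2 := by
        rw [hca, subtree?_append, hsa]
        simp [subtree?, hg]
      have hpv : pv t (c a) = v * pv t a := by
        rw [hca, pv_append a t (.node csa) [i] hsa]
        simp [pv, hg, hwv, mul_comm]
      rw [← hpv]
      refine WTree.sum_over_leaves_from t ht (c a) _ hsub _ fun p => ?_
      simp only [Finset.mem_filter, hLa p]
      constructor
      · rintro ⟨⟨hleaf, _⟩, hap⟩
        exact ⟨hleaf, hap⟩
      · rintro ⟨hleaf, hap⟩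
        exact ⟨⟨hleaf, a, ha, hap⟩, hap⟩
    · intro a ha b hb hab
      simp only [Function.onFun, Finset.disjoint_left, Finset.mem_filter]
      rintro p ⟨hp, hap⟩ ⟨_, hbp⟩
      have hap' : a <+: p := (hpre a ha).trans hap
      have hbp' : b <+: p := (hpre b hb).trans hbp
      exact hab (hdisj p ((hLa p).mp hp).1 a ha b hb hap' hbp')
  have hmain : (∑ p ∈ La, pv t p) = v * (∑ p ∈ L, pv t p) := by
    rw [hLsplit, hLasplit, Finset.mul_sum]
  refine ⟨hmain, fun hpos => ?_⟩
  rw [hmain, mul_div_assoc, div_self (ne_of_gt hpos), mul_one]
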